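/- Let Z be a measurable space, D a probability measure on Z, n ≥ 2, Ω ⊆ ℝ^d, (Ξ, μ) a probability space modeling the internal randomness of a randomized algorithm A : Z^n × Ξ → ℝ^d (jointly measurable), and ℓ : ℝ^d × Z × Z → ℝ a bounded measurable pairwise loss. Suppose A is ε-random-uniform stable: for all S, S' ∈ Z^n differing in at most one coordinate and all z, z' ∈ Z, ∫_Ξ [ℓ(A(S, ξ), z, z') − ℓ(A(S', ξ), z, z')] dμ(ξ) ≤ ε. Then |∫_Ξ ∫_{Z^n} [R_S(A(S, ξ)) − R(A(S, ξ))] d(D^n)(S) dμ(ξ)| ≤ 2ε, where R(w) = ∫∫ ℓ(w, z, z') dD(z) dD(z') is the population risk and R_S(w) = (2/(n(n−1)))·Σ_{1 ≤ i < j ≤ n} ℓ(w, S_i, S_j) is the empirical risk. -/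
import Mathlib


open MeasureTheory Function

/-- The empirical pairwise risk `R_S(w) = (2/(n(n−1)))·Σ_{i<j} ℓ(w, S_i, S_j)`. -/
noncomputable def empRisk {Z : Type*} {d n : ℕ}
    (ℓ : EuclideanSpace ℝ (Fin d) → Z → Z → ℝ) (S : Fin n → Z)
    (v : EuclideanSpace ℝ (Fin d)) : ℝ :=
  (2 / ((n : ℝ) * ((n : ℝ) - 1))) * ∑ i : Fin n, ∑ j ∈ Finset.Ioi i, ℓ v (S i) (S j)

/-- The population pairwise risk `R(w) = E_{(z,z') ∼ D×D}[ℓ(w, z, z')]`. -/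
noncomputable def popRisk {Z : Type*} [MeasurableSpace Z] {d : ℕ}
    (ℓ : EuclideanSpace ℝ (Fin d) → Z → Z → ℝ) (D : Measure Z)
    (v : EuclideanSpace ℝ (Fin d)) : ℝ :=
  ∫ z, ∫ z', ℓ v z z' ∂D ∂D

lemma measurePreserving_update_aux {Z : Type*} [MeasurableSpace Z] (D : Measure Z)
    [IsProbabilityMeasure D] {n : ℕ} (i : Fin n) :
    MeasurePreserving (fun p : (Fin n → Z) × Z => Function.update p.1 i p.2)
      ((Measure.pi fun _ : Fin n => D).prod D) (Measure.pi fun _ : Fin n => D) := by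
  refine ⟨measurable_update', ?_⟩
  refine (Measure.pi_eq fun s hs => ?_).symm
  rw [Measure.map_apply measurable_update' (MeasurableSet.univ_pi hs)]
  have hpre : (fun p : (Fin n → Z) × Z => Function.update p.1 i p.2) ⁻¹'
      (Set.pi Set.univ s) = (Set.pi Set.univ (Function.update s i Set.univ)) ×ˢ s i := by
    ext ⟨S, z⟩
    simp only [Set.mem_preimage, Set.mem_pi, Set.mem_univ, true_implies, Set.mem_prod]
    constructor
    · intro h
      refine ⟨fun k => ?_, by simpa using h i⟩
      rcases eq_or_ne k i with rfl | hk
      · simp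
      · simpa [Function.update_of_ne hk] using h k
    · rintro ⟨h1, h2⟩ k
      rcases eq_or_ne k i with rfl | hk
      · simpa using h2
      · simpa [Function.update_of_ne hk] using h1 k
  rw [hpre, Measure.prod_prod, Measure.pi_pi]
  have h1 : ∀ k, D (Function.update s i Set.univ k)
      = Function.update (fun k => D (s k)) i 1 k := by
    intro k
    rcases eq_or_ne k i with rfl | hk
    · simp
    · simp [Function.update_of_ne hk]
  rw [Finset.prod_congr rfl fun k _ => h1 k,
    Finset.prod_update_of_mem (Finset.mem_univ i),
    ← Finset.mul_prod_erase Finset.univ (fun k => D (s k)) (Finset.mem_univ i)]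
  simp [Finset.sdiff_singleton_eq_erase, mul_comm]

lemma measurePreserving_update2 {Z : Type*} [MeasurableSpace Z] (D : Measure Z)
    [IsProbabilityMeasure D] {n : ℕ} (i j : Fin n) :
    MeasurePreserving (fun p : (Fin n → Z) × Z × Z =>
        Function.update (Function.update p.1 i p.2.1) j p.2.2)
      ((Measure.pi fun _ : Fin n => D).prod (D.prod D))
      (Measure.pi fun _ : Fin n => D) := by
  set P := Measure.pi fun _ : Fin n => D
  have h0 : MeasurePreserving (MeasurableEquiv.prodAssoc.symm :
      (Fin n → Z) × Z × Z ≃ᵐ ((Fin n → Z) × Z) × Z)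
      (P.prod (D.prod D)) ((P.prod D).prod D) :=
    (measurePreserving_prodAssoc P D D).symm MeasurableEquiv.prodAssoc
  have h1 : MeasurePreserving
      (Prod.map (fun p : (Fin n → Z) × Z => Function.update p.1 i p.2) (id : Z → Z))
      ((P.prod D).prod D) (P.prod D) :=
    (measurePreserving_update_aux D i).prod (MeasurePreserving.id D)
  have h2 := measurePreserving_update_aux D j
  exact (h2.comp (h1.comp h0) : _)

lemma integrable_of_bdd {α : Type*} [MeasurableSpace α] {ν : Measure α} [IsFiniteMeasure ν]
    {f : α → ℝ} (hf : Measurable f) {C : ℝ} (h : ∀ x, |f x| ≤ C) : Integrable f ν :=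
  (integrable_const C).mono' hf.aestronglyMeasurable
    (Filter.Eventually.of_forall fun x => by simpa using h x)

lemma pair_count (n : ℕ) :
    (∑ i : Fin n, ∑ j ∈ Finset.Ioi i, (1 : ℝ)) * 2 = (n : ℝ) * ((n : ℝ) - 1) := by
  have hnat : (∑ i : Fin n, (Finset.Ioi i).card) * 2 = n * (n - 1) := by
    simp_rw [Fin.card_Ioi]
    rw [Fin.sum_univ_eq_sum_range (fun m => n - 1 - m) n,
      Finset.sum_range_reflect (fun m => m) n, Finset.sum_range_id_mul_two]
  have h1 : (∑ i : Fin n, ∑ j ∈ Finset.Ioi i, (1 : ℝ))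
      = ((∑ i : Fin n, (Finset.Ioi i).card : ℕ) : ℝ) := by
    push_cast
    simp
  rcases Nat.eq_zero_or_pos n with rfl | hn
  · simp
  · rw [h1, ← Nat.cast_ofNat (n := 2), ← Nat.cast_mul, hnat]
    push_cast [Nat.cast_sub hn]
    ring

lemma pair_bound {Z : Type*} [MeasurableSpace Z] (D : Measure Z) [IsProbabilityMeasure D]
    {n d : ℕ} {Ξ : Type*} [MeasurableSpace Ξ] (μ : Measure Ξ) [IsProbabilityMeasure μ]
    (A : (Fin n → Z) → Ξ → EuclideanSpace ℝ (Fin d))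
    (hA : Measurable fun p : (Fin n → Z) × Ξ => A p.1 p.2)
    (ℓ : EuclideanSpace ℝ (Fin d) → Z → Z → ℝ)
    (hmeas : Measurable fun p : EuclideanSpace ℝ (Fin d) × Z × Z => ℓ p.1 p.2.1 p.2.2)
    (C : ℝ) (hbound : ∀ v z z', |ℓ v z z'| ≤ C)
    (ε : ℝ)
    (hstab : ∀ S S' : Fin n → Z, (∃ i₀, ∀ i, i ≠ i₀ → S i = S' i) → ∀ z z' : Z,
      ∫ ξ, (ℓ (A S ξ) z z' - ℓ (A S' ξ) z z') ∂μ ≤ ε)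
    (i j : Fin n) (hij : i ≠ j) :
    |∫ ξ, ∫ S, (ℓ (A S ξ) (S i) (S j) - popRisk ℓ D (A S ξ))
        ∂(Measure.pi fun _ : Fin n => D) ∂μ| ≤ 2 * ε := by
  classical
  set P : Measure (Fin n → Z) := Measure.pi fun _ : Fin n => D with hPdef
  set ν : Measure ((Fin n → Z) × Z × Z) := P.prod (D.prod D) with hνdef
  set U : (Fin n → Z) × Z × Z → (Fin n → Z) :=
    fun p => Function.update (Function.update p.1 i p.2.1) j p.2.2 with hUdef
  have hUpm : MeasurePreserving U ν P := measurePreserving_update2 D i j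
  have hUm : Measurable U := hUpm.measurable
  have hAξ : ∀ ξ : Ξ, Measurable fun S : Fin n → Z => A S ξ := fun ξ =>
    hA.comp (measurable_id.prodMk measurable_const)
  have hint_ℓv : ∀ v : EuclideanSpace ℝ (Fin d),
      Integrable (fun q : Z × Z => ℓ v q.1 q.2) (D.prod D) := fun v =>
    integrable_of_bdd (hmeas.comp (measurable_const.prodMk measurable_id))
      (fun q => hbound v q.1 q.2)
  have hpop : ∀ v, popRisk ℓ D v = ∫ q : Z × Z, ℓ v q.1 q.2 ∂(D.prod D) := by
    intro v
    rw [MeasureTheory.integral_prod _ (hint_ℓv v)]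
    rfl
  have hpopbd : ∀ v, |popRisk ℓ D v| ≤ C := by
    intro v
    rw [hpop]
    have := norm_integral_le_of_norm_le_const (μ := D.prod D)
      (f := fun q : Z × Z => ℓ v q.1 q.2) (C := C)
      (Filter.Eventually.of_forall fun q => by simpa using hbound v q.1 q.2)
    simpa using this
  have hpopmeas : Measurable (popRisk ℓ D) := by
    have h1 : Measurable fun v => ∫ q : Z × Z, ℓ v q.1 q.2 ∂(D.prod D) :=
      (StronglyMeasurable.integral_prod_right' (hmeas.stronglyMeasurable)).measurable
    have h2 : (popRisk ℓ D) = fun v => ∫ q : Z × Z, ℓ v q.1 q.2 ∂(D.prod D) :=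
      funext hpop
    rw [h2]; exact h1
  -- Step 1: for each ξ, change variables in the inner integral
  have step1 : ∀ ξ : Ξ, ∫ S, (ℓ (A S ξ) (S i) (S j) - popRisk ℓ D (A S ξ)) ∂P
      = ∫ p, (ℓ (A (U p) ξ) p.2.1 p.2.2 - ℓ (A p.1 ξ) p.2.1 p.2.2) ∂ν := by
    intro ξ
    have hm1 : Measurable fun S : Fin n → Z => ℓ (A S ξ) (S i) (S j) :=
      hmeas.comp ((hAξ ξ).prodMk ((measurable_pi_apply i).prodMk (measurable_pi_apply j)))
    have hm2 : Measurable fun S : Fin n → Z => popRisk ℓ D (A S ξ) :=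
      hpopmeas.comp (hAξ ξ)
    have hi1 : Integrable (fun S : Fin n → Z => ℓ (A S ξ) (S i) (S j)) P :=
      integrable_of_bdd hm1 (fun S => hbound _ _ _)
    have hi2 : Integrable (fun S : Fin n → Z => popRisk ℓ D (A S ξ)) P :=
      integrable_of_bdd hm2 (fun S => hpopbd _)
    have hm3 : Measurable fun p : (Fin n → Z) × Z × Z => ℓ (A (U p) ξ) p.2.1 p.2.2 :=
      hmeas.comp ((((hAξ ξ).comp hUm)).prodMk
        ((measurable_fst.comp measurable_snd).prodMk (measurable_snd.comp measurable_snd)))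
    have hm4 : Measurable fun p : (Fin n → Z) × Z × Z => ℓ (A p.1 ξ) p.2.1 p.2.2 :=
      hmeas.comp ((((hAξ ξ).comp measurable_fst)).prodMk
        ((measurable_fst.comp measurable_snd).prodMk (measurable_snd.comp measurable_snd)))
    have hi3 : Integrable (fun p : (Fin n → Z) × Z × Z => ℓ (A (U p) ξ) p.2.1 p.2.2) ν :=
      integrable_of_bdd hm3 (fun p => hbound _ _ _)
    have hi4 : Integrable (fun p : (Fin n → Z) × Z × Z => ℓ (A p.1 ξ) p.2.1 p.2.2) ν :=
      integrable_of_bdd hm4 (fun p => hbound _ _ _)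
    rw [integral_sub hi1 hi2, integral_sub hi3 hi4]
    congr 1
    · have e1 : ∫ S, ℓ (A S ξ) (S i) (S j) ∂P
          = ∫ p, ℓ (A (U p) ξ) (U p i) (U p j) ∂ν := by
        rw [← hUpm.map_eq,
          integral_map hUpm.measurable.aemeasurable hm1.aestronglyMeasurable]
      rw [e1]
      refine integral_congr_ae (Filter.Eventually.of_forall fun p => ?_)
      have hUi : U p i = p.2.1 := by
        simp [hUdef, Function.update_of_ne hij]
      have hUj : U p j = p.2.2 := by simp [hUdef]
      show ℓ (A (U p) ξ) (U p i) (U p j) = ℓ (A (U p) ξ) p.2.1 p.2.2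
      rw [hUi, hUj]
    · have e2 : ∫ S, popRisk ℓ D (A S ξ) ∂P
          = ∫ S, ∫ q : Z × Z, ℓ (A S ξ) q.1 q.2 ∂(D.prod D) ∂P := by
        refine integral_congr_ae (Filter.Eventually.of_forall fun S => ?_)
        exact hpop _
      rw [e2, ← MeasureTheory.integral_prod _ (integrable_of_bdd hm4 fun p => hbound _ _ _)]
  rw [integral_congr_ae (Filter.Eventually.of_forall step1)]
  set F : Ξ → ((Fin n → Z) × Z × Z) → ℝ :=
    fun ξ p => ℓ (A (U p) ξ) p.2.1 p.2.2 - ℓ (A p.1 ξ) p.2.1 p.2.2 with hFdef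
  have hFm : Measurable fun q : Ξ × ((Fin n → Z) × Z × Z) => F q.1 q.2 := by
    apply Measurable.sub
    · exact hmeas.comp ((hA.comp ((hUm.comp measurable_snd).prodMk measurable_fst)).prodMk
        (((measurable_fst.comp (measurable_snd.comp measurable_snd))).prodMk
          ((measurable_snd.comp (measurable_snd.comp measurable_snd)))))
    · exact hmeas.comp ((hA.comp ((measurable_fst.comp measurable_snd).prodMk
        measurable_fst)).prodMk
        (((measurable_fst.comp (measurable_snd.comp measurable_snd))).prodMk
          ((measurable_snd.comp (measurable_snd.comp measurable_snd)))))
  have hFint : Integrable (Function.uncurry F) (μ.prod ν) := by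
    refine integrable_of_bdd hFm (C := C + C) fun q => ?_
    calc |F q.1 q.2| ≤ |ℓ (A (U q.2) q.1) q.2.2.1 q.2.2.2| + |ℓ (A q.2.1 q.1) q.2.2.1 q.2.2.2| :=
          abs_sub _ _
    _ ≤ C + C := add_le_add (hbound _ _ _) (hbound _ _ _)
  rw [MeasureTheory.integral_integral_swap hFint]
  have hptwise : ∀ p : (Fin n → Z) × Z × Z, |∫ ξ, F ξ p ∂μ| ≤ 2 * ε := by
    intro p
    set S := p.1
    set S1 := Function.update S i p.2.1 with hS1
    set S2 := Function.update S1 j p.2.2 with hS2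
    have hint : ∀ T : Fin n → Z, Integrable (fun ξ => ℓ (A T ξ) p.2.1 p.2.2) μ := by
      intro T
      exact integrable_of_bdd (hmeas.comp ((hA.comp
        (measurable_const.prodMk measurable_id)).prodMk measurable_const))
        (fun ξ => hbound _ _ _)
    have hnbr1 : ∃ i₀, ∀ k, k ≠ i₀ → S2 k = S1 k :=
      ⟨j, fun k hk => Function.update_of_ne hk _ _⟩
    have hnbr1' : ∃ i₀, ∀ k, k ≠ i₀ → S1 k = S2 k :=
      ⟨j, fun k hk => (Function.update_of_ne hk _ _).symm⟩
    have hnbr2 : ∃ i₀, ∀ k, k ≠ i₀ → S1 k = S k :=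
      ⟨i, fun k hk => Function.update_of_ne hk _ _⟩
    have hnbr2' : ∃ i₀, ∀ k, k ≠ i₀ → S k = S1 k :=
      ⟨i, fun k hk => (Function.update_of_ne hk _ _).symm⟩
    have hIS : ∀ T T' : Fin n → Z,
        ∫ ξ, (ℓ (A T ξ) p.2.1 p.2.2 - ℓ (A T' ξ) p.2.1 p.2.2) ∂μ
        = (∫ ξ, ℓ (A T ξ) p.2.1 p.2.2 ∂μ) - ∫ ξ, ℓ (A T' ξ) p.2.1 p.2.2 ∂μ :=
      fun T T' => integral_sub (hint T) (hint T')
    have h1 := hstab S S1 hnbr2' p.2.1 p.2.2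
    have h2 := hstab S1 S2 hnbr1' p.2.1 p.2.2
    have h3 := hstab S2 S1 hnbr1 p.2.1 p.2.2
    have h4 := hstab S1 S hnbr2 p.2.1 p.2.2
    rw [hIS] at h1 h2 h3 h4
    have hFeq : (fun ξ => F ξ p) = fun ξ => ℓ (A S2 ξ) p.2.1 p.2.2 - ℓ (A S ξ) p.2.1 p.2.2 := rfl
    rw [hFeq, hIS, abs_le]
    constructor <;> linarith
  have hfin := norm_integral_le_of_norm_le_const (μ := ν)
    (f := fun p => ∫ ξ, F ξ p ∂μ) (C := 2 * ε)
    (Filter.Eventually.of_forall fun p => by simpa using hptwise p)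
  simpa [Real.norm_eq_abs] using hfin

/-- **Theorem 2.** If the randomized algorithm `A` is `ε`-random-uniform stable for the bounded
measurable pairwise loss `ℓ`, then the expected generalization error is bounded by `2ε`. -/
theorem stability_implies_generalization_pairwise
    {Z : Type*} [MeasurableSpace Z] (D : Measure Z) [IsProbabilityMeasure D]
    (n d : ℕ) (hn : 2 ≤ n)
    (Ω : Set (EuclideanSpace ℝ (Fin d)))
    {Ξ : Type*} [MeasurableSpace Ξ] (μ : Measure Ξ) [IsProbabilityMeasure μ]
    (A : (Fin n → Z) → Ξ → EuclideanSpace ℝ (Fin d))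
    (hA : Measurable fun p : (Fin n → Z) × Ξ => A p.1 p.2)
    (ℓ : EuclideanSpace ℝ (Fin d) → Z → Z → ℝ)
    (hmeas : Measurable fun p : EuclideanSpace ℝ (Fin d) × Z × Z => ℓ p.1 p.2.1 p.2.2)
    (C : ℝ) (hbound : ∀ v z z', |ℓ v z z'| ≤ C)
    (ε : ℝ)
    (hstab : ∀ S S' : Fin n → Z, (∃ i₀, ∀ i, i ≠ i₀ → S i = S' i) → ∀ z z' : Z,
      ∫ ξ, (ℓ (A S ξ) z z' - ℓ (A S' ξ) z z') ∂μ ≤ ε) :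
    |∫ ξ, ∫ S, (empRisk ℓ S (A S ξ) - popRisk ℓ D (A S ξ))
        ∂(Measure.pi fun _ : Fin n => D) ∂μ| ≤ 2 * ε := by
  classical
  set P : Measure (Fin n → Z) := Measure.pi fun _ : Fin n => D with hPdef
  set c : ℝ := 2 / ((n : ℝ) * ((n : ℝ) - 1)) with hcdef
  have hn2 : (2 : ℝ) ≤ (n : ℝ) := by exact_mod_cast hn
  have hM : (0 : ℝ) < (n : ℝ) * ((n : ℝ) - 1) := by nlinarith
  have hc0 : 0 ≤ c := by positivity
  have hNc : c * (∑ i : Fin n, ∑ j ∈ Finset.Ioi i, (1 : ℝ)) = 1 := by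
    have h2 := pair_count n
    set N := ∑ i : Fin n, ∑ j ∈ Finset.Ioi i, (1 : ℝ) with hN
    rw [hcdef, div_mul_eq_mul_div, div_eq_one_iff_eq (ne_of_gt hM)]
    linarith
  -- nonneg ε
  have hZ : Nonempty Z := by
    by_contra h
    rw [not_nonempty_iff] at h
    have h1 : D Set.univ = 1 := measure_univ
    rw [Set.univ_eq_empty_iff.mpr h] at h1
    simp at h1
  obtain ⟨z0⟩ := hZ
  have hε : 0 ≤ ε := by
    have h0 := hstab (fun _ => z0) (fun _ => z0)
      ⟨⟨0, by omega⟩, fun _ _ => rfl⟩ z0 z0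
    simpa using h0
  -- measurability of auxiliary functions
  have hAξ : ∀ ξ : Ξ, Measurable fun S : Fin n → Z => A S ξ := fun ξ =>
    hA.comp (measurable_id.prodMk measurable_const)
  have hint_ℓv : ∀ v : EuclideanSpace ℝ (Fin d),
      Integrable (fun q : Z × Z => ℓ v q.1 q.2) (D.prod D) := fun v =>
    integrable_of_bdd (hmeas.comp (measurable_const.prodMk measurable_id))
      (fun q => hbound v q.1 q.2)
  have hpop : ∀ v, popRisk ℓ D v = ∫ q : Z × Z, ℓ v q.1 q.2 ∂(D.prod D) := by
    intro v
    rw [MeasureTheory.integral_prod _ (hint_ℓv v)]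
    rfl
  have hpopbd : ∀ v, |popRisk ℓ D v| ≤ C := by
    intro v
    rw [hpop]
    have := norm_integral_le_of_norm_le_const (μ := D.prod D)
      (f := fun q : Z × Z => ℓ v q.1 q.2) (C := C)
      (Filter.Eventually.of_forall fun q => by simpa using hbound v q.1 q.2)
    simpa using this
  have hpopmeas : Measurable (popRisk ℓ D) := by
    have h1 : Measurable fun v => ∫ q : Z × Z, ℓ v q.1 q.2 ∂(D.prod D) :=
      (StronglyMeasurable.integral_prod_right' (hmeas.stronglyMeasurable)).measurable
    have h2 : (popRisk ℓ D) = fun v => ∫ q : Z × Z, ℓ v q.1 q.2 ∂(D.prod D) := funext hpop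
    rw [h2]; exact h1
  have hm1 : ∀ (ξ : Ξ) (i j : Fin n),
      Measurable fun S : Fin n → Z => ℓ (A S ξ) (S i) (S j) := fun ξ i j =>
    hmeas.comp ((hAξ ξ).prodMk ((measurable_pi_apply i).prodMk (measurable_pi_apply j)))
  have hm2 : ∀ ξ : Ξ, Measurable fun S : Fin n → Z => popRisk ℓ D (A S ξ) := fun ξ =>
    hpopmeas.comp (hAξ ξ)
  have hintS : ∀ (ξ : Ξ) (i j : Fin n),
      Integrable (fun S => c * (ℓ (A S ξ) (S i) (S j) - popRisk ℓ D (A S ξ))) P := by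
    intro ξ i j
    refine integrable_of_bdd (measurable_const.mul ((hm1 ξ i j).sub (hm2 ξ)))
      (C := |c| * (C + C)) fun S => ?_
    rw [abs_mul]
    refine mul_le_mul_of_nonneg_left ?_ (abs_nonneg c)
    calc |ℓ (A S ξ) (S i) (S j) - popRisk ℓ D (A S ξ)|
        ≤ |ℓ (A S ξ) (S i) (S j)| + |popRisk ℓ D (A S ξ)| := abs_sub _ _
    _ ≤ C + C := add_le_add (hbound _ _ _) (hpopbd _)
  -- decomposition of the integrand
  have hdecomp : ∀ (S : Fin n → Z) (v : EuclideanSpace ℝ (Fin d)),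
      empRisk ℓ S v - popRisk ℓ D v
      = ∑ i : Fin n, ∑ j ∈ Finset.Ioi i, (c * (ℓ v (S i) (S j) - popRisk ℓ D v)) := by
    intro S v
    have e0 : ∑ i : Fin n, ∑ j ∈ Finset.Ioi i, (c * (ℓ v (S i) (S j) - popRisk ℓ D v))
        = c * ∑ i : Fin n, ∑ j ∈ Finset.Ioi i, (ℓ v (S i) (S j) - popRisk ℓ D v) := by
      rw [Finset.mul_sum]
      exact Finset.sum_congr rfl fun i _ => (Finset.mul_sum _ _ _).symm
    have e1 : ∑ i : Fin n, ∑ j ∈ Finset.Ioi i, (ℓ v (S i) (S j) - popRisk ℓ D v)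
        = (∑ i : Fin n, ∑ j ∈ Finset.Ioi i, ℓ v (S i) (S j))
          - (∑ i : Fin n, ∑ j ∈ Finset.Ioi i, (1 : ℝ)) * popRisk ℓ D v := by
      rw [Finset.sum_mul, ← Finset.sum_sub_distrib]
      refine Finset.sum_congr rfl fun i _ => ?_
      rw [Finset.sum_mul, ← Finset.sum_sub_distrib]
      simp
    rw [e0, e1, mul_sub, ← mul_assoc, hNc, one_mul]
    unfold empRisk
    rw [hcdef]
  -- inner sum exchange
  have hinner : ∀ ξ : Ξ, ∫ S, (empRisk ℓ S (A S ξ) - popRisk ℓ D (A S ξ)) ∂P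
      = ∑ i : Fin n, ∑ j ∈ Finset.Ioi i,
          c * ∫ S, (ℓ (A S ξ) (S i) (S j) - popRisk ℓ D (A S ξ)) ∂P := by
    intro ξ
    rw [integral_congr_ae (Filter.Eventually.of_forall fun S => hdecomp S (A S ξ))]
    rw [integral_finset_sum _ (fun i _ => integrable_finset_sum _ fun j _ => hintS ξ i j)]
    refine Finset.sum_congr rfl fun i _ => ?_
    rw [integral_finset_sum _ (fun j _ => hintS ξ i j)]
    refine Finset.sum_congr rfl fun j _ => ?_
    rw [MeasureTheory.integral_const_mul]
  rw [integral_congr_ae (Filter.Eventually.of_forall hinner)]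
  -- outer sum exchange
  have hmξ : ∀ i j : Fin n, Measurable fun ξ : Ξ =>
      ∫ S, (ℓ (A S ξ) (S i) (S j) - popRisk ℓ D (A S ξ)) ∂P := by
    intro i j
    have hAq : Measurable fun q : Ξ × (Fin n → Z) => A q.2 q.1 :=
      hA.comp (measurable_snd.prodMk measurable_fst)
    have hq : Measurable fun q : Ξ × (Fin n → Z) =>
        ℓ (A q.2 q.1) (q.2 i) (q.2 j) - popRisk ℓ D (A q.2 q.1) := by
      refine Measurable.sub ?_ (hpopmeas.comp hAq)
      exact hmeas.comp (hAq.prodMk (((measurable_pi_apply i).comp measurable_snd).prodMk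
        ((measurable_pi_apply j).comp measurable_snd)))
    exact (StronglyMeasurable.integral_prod_right' hq.stronglyMeasurable).measurable
  have hintξ : ∀ i j : Fin n, Integrable (fun ξ : Ξ =>
      c * ∫ S, (ℓ (A S ξ) (S i) (S j) - popRisk ℓ D (A S ξ)) ∂P) μ := by
    intro i j
    refine integrable_of_bdd (measurable_const.mul (hmξ i j)) (C := |c| * (C + C)) fun ξ => ?_
    rw [abs_mul]
    refine mul_le_mul_of_nonneg_left ?_ (abs_nonneg c)
    have := norm_integral_le_of_norm_le_const (μ := P)
      (f := fun S => ℓ (A S ξ) (S i) (S j) - popRisk ℓ D (A S ξ)) (C := C + C)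
      (Filter.Eventually.of_forall fun S => by
        have : |ℓ (A S ξ) (S i) (S j) - popRisk ℓ D (A S ξ)|
            ≤ |ℓ (A S ξ) (S i) (S j)| + |popRisk ℓ D (A S ξ)| := abs_sub _ _
        have h2 := add_le_add (hbound (A S ξ) (S i) (S j)) (hpopbd (A S ξ))
        simpa using this.trans h2)
    simpa using this
  rw [integral_finset_sum _ (fun i _ => integrable_finset_sum _ fun j _ => hintξ i j)]
  have hswap : ∀ i : Fin n, ∫ ξ, (∑ j ∈ Finset.Ioi i,
        c * ∫ S, (ℓ (A S ξ) (S i) (S j) - popRisk ℓ D (A S ξ)) ∂P) ∂μ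
      = ∑ j ∈ Finset.Ioi i,
        c * ∫ ξ, ∫ S, (ℓ (A S ξ) (S i) (S j) - popRisk ℓ D (A S ξ)) ∂P ∂μ := by
    intro i
    rw [integral_finset_sum _ (fun j _ => hintξ i j)]
    exact Finset.sum_congr rfl fun j _ => MeasureTheory.integral_const_mul _ _
  rw [Finset.sum_congr rfl fun i _ => hswap i]
  -- final bound
  have hstep : ∀ i : Fin n, ∀ j ∈ Finset.Ioi i,
      |c * ∫ ξ, ∫ S, (ℓ (A S ξ) (S i) (S j) - popRisk ℓ D (A S ξ)) ∂P ∂μ| ≤ c * (2 * ε) := by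
    intro i j hj
    rw [abs_mul, abs_of_nonneg hc0]
    exact mul_le_mul_of_nonneg_left
      (pair_bound D μ A hA ℓ hmeas C hbound ε hstab i j (Finset.mem_Ioi.mp hj).ne) hc0
  calc |∑ i : Fin n, ∑ j ∈ Finset.Ioi i,
        c * ∫ ξ, ∫ S, (ℓ (A S ξ) (S i) (S j) - popRisk ℓ D (A S ξ)) ∂P ∂μ|
      ≤ ∑ i : Fin n, ∑ j ∈ Finset.Ioi i,
        |c * ∫ ξ, ∫ S, (ℓ (A S ξ) (S i) (S j) - popRisk ℓ D (A S ξ)) ∂P ∂μ| := by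
        refine (Finset.abs_sum_le_sum_abs _ _).trans ?_
        exact Finset.sum_le_sum fun i _ => Finset.abs_sum_le_sum_abs _ _
    _ ≤ ∑ i : Fin n, ∑ j ∈ Finset.Ioi i, c * (2 * ε) := by
        exact Finset.sum_le_sum fun i _ => Finset.sum_le_sum fun j hj => hstep i j hj
    _ = (∑ i : Fin n, ∑ j ∈ Finset.Ioi i, (1 : ℝ)) * (c * (2 * ε)) := by
        rw [Finset.sum_mul]
        refine Finset.sum_congr rfl fun i _ => ?_
        rw [Finset.sum_mul]
        simp
    _ = 2 * ε := by
        rw [show (∑ i : Fin n, ∑ j ∈ Finset.Ioi i, (1:ℝ)) * (c * (2 * ε))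
          = (c * (∑ i : Fin n, ∑ j ∈ Finset.Ioi i, (1:ℝ))) * (2 * ε) by ring, hNc, one_mul]
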